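/- For each integer $k \ge 2$, there exists a non-planar finite simple connected graph $G$ with $\dim_k(G) = 2$. -/

import Mathlib

open SimpleGraph

/-- The distance-`k` truncated distance `dₖ(x,y) = min{d(x,y), k+1}`, valued in `ℕ∞`
(so unreachable pairs have distance `⊤`, which is truncated to `k+1`). -/
noncomputable def distK {V : Type*} (G : SimpleGraph V) (k : ℕ) (x y : V) : ℕ∞ :=
  min (G.edist x y) (k + 1)

/-- `S` is a distance-`k` resolving set of `G`. -/
def IsDistKResolving {V : Type*} (G : SimpleGraph V) (k : ℕ) (S : Set V) : Prop :=
  ∀ x y : V, x ≠ y → ∃ z ∈ S, distK G k x z ≠ distK G k y z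

/-- The distance-`k` dimension of a finite graph `G`: the minimum cardinality of a
distance-`k` resolving set of `G`. -/
noncomputable def dimK {V : Type*} [Fintype V] (G : SimpleGraph V) (k : ℕ) : ℕ :=
  sInf { m | ∃ S : Finset V, IsDistKResolving G k ↑S ∧ S.card = m }

/-- `H` is a minor of `G`: there is an assignment of disjoint, nonempty, connected
branch sets in `G` to the vertices of `H` such that edges of `H` are realized by
edges of `G` between the corresponding branch sets. -/
def IsMinor {V W : Type*} (G : SimpleGraph V) (H : SimpleGraph W) : Prop :=
  ∃ f : W → Set V,
    (∀ w, (f w).Nonempty) ∧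
    (∀ w, (G.induce (f w)).Connected) ∧
    (∀ w w', w ≠ w' → Disjoint (f w) (f w')) ∧
    (∀ w w', H.Adj w w' → ∃ a ∈ f w, ∃ b ∈ f w', G.Adj a b)

/-- By Wagner's theorem, a graph is non-planar iff it has `K₅` or `K₃,₃` as a minor. -/
def NonPlanar {V : Type*} (G : SimpleGraph V) : Prop :=
  IsMinor G (⊤ : SimpleGraph (Fin 5)) ∨ IsMinor G (completeBipartiteGraph (Fin 3) (Fin 3))

/- ---------------- Auxiliary construction ---------------- -/

/-- Edge list of a subdivision of `K₃,₃` on 10 vertices. -/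
def edges7 : List (ℕ × ℕ) :=
  [(0,5),(0,6),(0,7),(1,3),(1,5),(1,8),(2,4),(2,5),(2,9),(3,6),(3,9),(4,7),(4,8)]

/-- The graph: a subdivision of `K₃,₃`. -/
def G7 : SimpleGraph (Fin 10) where
  Adj x y := x ≠ y ∧ ((x.val, y.val) ∈ edges7 ∨ (y.val, x.val) ∈ edges7)
  symm := by
    constructor
    intro x y h
    exact ⟨Ne.symm h.1, h.2.symm⟩
  loopless := by
    constructor
    intro x h
    exact h.1 rfl

instance : DecidableRel G7.Adj := fun x y =>
  decidable_of_iff (x ≠ y ∧ ((x.val, y.val) ∈ edges7 ∨ (y.val, x.val) ∈ edges7)) Iff.rfl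

/-- Distance matrix of `G7`. -/
def dmat : List (List ℕ) :=
  [[0,2,2,2,2,1,1,1,3,3],
   [2,0,2,1,2,1,2,3,1,2],
   [2,2,0,2,1,1,3,2,2,1],
   [2,1,2,0,3,2,1,3,2,1],
   [2,2,1,3,0,2,3,1,1,2],
   [1,1,1,2,2,0,2,2,2,2],
   [1,2,3,1,3,2,0,2,3,2],
   [1,3,2,3,1,2,2,0,2,3],
   [3,1,2,2,1,2,3,2,0,3],
   [3,2,1,1,2,2,2,3,3,0]]

def fd (x y : Fin 10) : ℕ := (dmat.getD x.val []).getD y.val 0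

/-- General characterization of `edist` via a certified distance matrix. -/
lemma edist_eq_of_matrix {V : Type*} (G : SimpleGraph V) (f : V → V → ℕ)
    (h0 : ∀ x, f x x = 0)
    (h1 : ∀ x y : V, x ≠ y → ∃ z, G.Adj x z ∧ f x y = f z y + 1)
    (h2 : ∀ x y z : V, G.Adj x z → f x y ≤ f z y + 1)
    (x y : V) : G.edist x y = (f x y : ℕ∞) := by
  have key : ∀ n (x : V), f x y = n → G.edist x y ≤ (n : ℕ∞) := by
    intro n
    induction n using Nat.strong_induction_on with
    | _ n ih =>
      intro x hf
      rcases eq_or_ne x y with rfl | hne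
      · simp [edist_self]
      · obtain ⟨z, hadj, hz⟩ := h1 x y hne
        have hlt : f z y < n := by omega
        have hzy := ih (f z y) hlt z rfl
        calc G.edist x y ≤ G.edist x z + G.edist z y := SimpleGraph.edist_triangle
          _ ≤ 1 + (f z y : ℕ∞) := by
              refine add_le_add ?_ hzy
              have := SimpleGraph.edist_le hadj.toWalk
              simpa using this
          _ = (n : ℕ∞) := by
              have hn : 1 + f z y = n := by omega
              exact_mod_cast hn
  have hup : G.edist x y ≤ (f x y : ℕ∞) := key (f x y) x rfl
  refine le_antisymm hup ?_
  have hnt : G.edist x y ≠ ⊤ := ne_top_of_le_ne_top (by simp) hup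
  obtain ⟨p, hp⟩ := SimpleGraph.exists_walk_of_edist_ne_top hnt
  have hlen : ∀ {a b : V} (q : G.Walk a b), f a b ≤ q.length := by
    intro a b q
    induction q with
    | nil => simp [h0]
    | @cons u v w h q ih =>
        have h' := h2 u w v h
        rw [SimpleGraph.Walk.length_cons]
        omega
  rw [← hp]
  exact_mod_cast hlen p

lemma fd_h0 : ∀ x : Fin 10, fd x x = 0 := by decide
lemma fd_h1 : ∀ x y : Fin 10, x ≠ y → ∃ z, G7.Adj x z ∧ fd x y = fd z y + 1 := by decide
lemma fd_h2 : ∀ x y z : Fin 10, G7.Adj x z → fd x y ≤ fd z y + 1 := by decide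

lemma G7_edist (x y : Fin 10) : G7.edist x y = (fd x y : ℕ∞) :=
  edist_eq_of_matrix G7 fd fd_h0 fd_h1 fd_h2 x y

lemma G7_connected : G7.Connected := by
  rw [connected_iff]
  refine ⟨fun x y => ?_, ⟨0⟩⟩
  apply SimpleGraph.reachable_of_edist_ne_top
  rw [G7_edist]
  simp

lemma fd_le3 : ∀ x y : Fin 10, fd x y ≤ 3 := by decide

lemma G7_distK {k : ℕ} (hk : 2 ≤ k) (x y : Fin 10) :
    distK G7 k x y = (fd x y : ℕ∞) := by
  unfold distK
  rw [G7_edist]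
  apply min_eq_left
  have h1 : fd x y ≤ 3 := fd_le3 x y
  have h2 : ((fd x y : ℕ) : ℕ∞) ≤ ((k + 1 : ℕ) : ℕ∞) := by
    exact_mod_cast (by omega : fd x y ≤ k + 1)
  simpa using h2

/-- helper: a "star" set induces a connected subgraph. -/
lemma induce_connected_star {V : Type*} (G : SimpleGraph V) (s : Set V) (a : V)
    (ha : a ∈ s) (h : ∀ b ∈ s, b ≠ a → G.Adj a b) : (G.induce s).Connected := by
  rw [connected_iff]
  refine ⟨fun u v => ?_, ⟨⟨a, ha⟩⟩⟩
  have reach : ∀ w : s, (G.induce s).Reachable ⟨a, ha⟩ w := by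
    rintro ⟨b, hb⟩
    rcases eq_or_ne b a with rfl | hba
    · rfl
    · have hadj : (G.induce s).Adj ⟨a, ha⟩ ⟨b, hb⟩ := h b hb hba
      exact hadj.reachable
  exact (reach u).symm.trans (reach v)

/-- Branch sets of the `K₃,₃` minor. -/
def bset : Fin 3 ⊕ Fin 3 → Finset (Fin 10) :=
  Sum.elim ![{0,6,7}, {1,8}, {2,9}] ![{3}, {4}, {5}]

/-- Centers of the branch sets. -/
def bctr : Fin 3 ⊕ Fin 3 → Fin 10 := Sum.elim ![0, 1, 2] ![3, 4, 5]

lemma G7_nonplanar : NonPlanar G7 := by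
  right
  refine ⟨fun w => (bset w : Set (Fin 10)), ?_, ?_, ?_, ?_⟩
  · intro w
    rw [Finset.coe_nonempty]
    revert w; decide
  · intro w
    apply induce_connected_star G7 _ (bctr w)
    · have : ∀ w, bctr w ∈ bset w := by decide
      exact this w
    · intro b hb hba
      have hb' : b ∈ bset w := hb
      have : ∀ w, ∀ b ∈ bset w, b ≠ bctr w → G7.Adj (bctr w) b := by decide
      exact this w b hb' hba
  · intro w w' hne
    rw [Finset.disjoint_coe]
    revert hne; revert w w'; decide
  · intro w w' hadj
    have key : ∀ i j : Fin 3, ∃ a ∈ bset (Sum.inl i), ∃ b ∈ bset (Sum.inr j),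
        G7.Adj a b := by decide
    rcases hadj with ⟨hl, hr⟩ | ⟨hl, hr⟩
    · obtain ⟨i, rfl⟩ := Sum.isLeft_iff.mp hl
      obtain ⟨j, rfl⟩ := Sum.isRight_iff.mp hr
      obtain ⟨a, ha, b, hb, hab⟩ := key i j
      exact ⟨a, ha, b, hb, hab⟩
    · obtain ⟨j, rfl⟩ := Sum.isRight_iff.mp hl
      obtain ⟨i, rfl⟩ := Sum.isLeft_iff.mp hr
      obtain ⟨a, ha, b, hb, hab⟩ := key i j
      exact ⟨b, hb, a, ha, hab.symm⟩

lemma fd_resolve : ∀ x y : Fin 10, x ≠ y → fd x 0 ≠ fd y 0 ∨ fd x 3 ≠ fd y 3 := by decide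

lemma fd_collide : ∀ z : Fin 10, ∃ x y : Fin 10, x ≠ y ∧ fd x z = fd y z := by decide

lemma G7_dimK {k : ℕ} (hk : 2 ≤ k) : dimK G7 k = 2 := by
  have mem2 : 2 ∈ { m | ∃ S : Finset (Fin 10), IsDistKResolving G7 k ↑S ∧ S.card = m } := by
    refine ⟨{0, 3}, ?_, by decide⟩
    intro x y hxy
    rcases fd_resolve x y hxy with h | h
    · exact ⟨0, by simp, by rw [G7_distK hk, G7_distK hk]; exact_mod_cast h⟩
    · exact ⟨3, by simp, by rw [G7_distK hk, G7_distK hk]; exact_mod_cast h⟩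
  unfold dimK
  refine le_antisymm (Nat.sInf_le mem2) (le_csInf ⟨2, mem2⟩ ?_)
  rintro m ⟨S, hres, hcard⟩
  by_contra hlt
  have hS1 : S.card ≤ 1 := by omega
  rcases S.eq_empty_or_nonempty with rfl | ⟨z₀, hz₀⟩
  · obtain ⟨z, hz, -⟩ := hres 0 1 (by decide)
    simp at hz
  · have hone : ∀ w ∈ S, w = z₀ := by
      intro w hw
      exact Finset.card_le_one.mp hS1 w hw z₀ hz₀
    obtain ⟨x, y, hxy, hfd⟩ := fd_collide z₀
    obtain ⟨z, hzS, hne⟩ := hres x y hxy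
    have hz : z = z₀ := hone z hzS
    subst hz
    rw [G7_distK hk, G7_distK hk] at hne
    exact hne (by exact_mod_cast hfd)

/-- For each integer `k ≥ 2`, there exists a non-planar connected graph `G`
with `dimₖ(G) = 2`. -/
theorem stmt7 (k : ℕ) (hk : 2 ≤ k) :
    ∃ (n : ℕ) (G : SimpleGraph (Fin n)), G.Connected ∧ NonPlanar G ∧ dimK G k = 2 := by
  exact ⟨10, G7, G7_connected, G7_nonplanar, G7_dimK hk⟩
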